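/- With ψ normalized and A symmetric with ψ ∈ Dom(A), the minimum of ‖(A − f(X))ψ‖² over real-valued Borel f equals ∫_{ψ=0} |Aψ(x)|² dx + ∫_{ψ≠0} (Im((Aψ)(x)/ψ(x)))² |ψ(x)|² dx. -/

import Mathlib

open MeasureTheory Complex

lemma quad_min (z w : ℂ) (hz : z ≠ 0) (t : ℝ) :
    ‖w - ((((starRingEnd ℂ) z * w).re / ‖z‖ ^ 2 : ℝ) : ℂ) * z‖ ^ 2 ≤ ‖w - (t : ℂ) * z‖ ^ 2 := by
  have hs : 0 < Complex.normSq z := Complex.normSq_pos.mpr hz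
  have hn : ‖z‖ ^ 2 = Complex.normSq z := by
    rw [Complex.sq_norm]
  simp only [Complex.sq_norm, hn, Complex.normSq_apply, Complex.sub_re,
    Complex.sub_im, Complex.mul_re, Complex.mul_im, Complex.ofReal_re, Complex.ofReal_im,
    Complex.conj_re, Complex.conj_im] at *
  set a := z.re; set b := z.im; set c := w.re; set d := w.im
  have hne : a*a + b*b ≠ 0 := ne_of_gt hs
  have hne' : a^2 + b^2 ≠ 0 := by rw [sq, sq]; exact hne
  field_simp
  nlinarith [mul_nonneg (add_nonneg (sq_nonneg a) (sq_nonneg b)) (sq_nonneg (t*(a^2+b^2) - (a*c+b*d))), hs, sq_nonneg (a*d-b*c)]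

lemma quad_val (z w : ℂ) (hz : z ≠ 0) :
    ‖w - ((((starRingEnd ℂ) z * w).re / ‖z‖ ^ 2 : ℝ) : ℂ) * z‖ ^ 2
      = (w / z).im ^ 2 * ‖z‖ ^ 2 := by
  have hs : 0 < Complex.normSq z := Complex.normSq_pos.mpr hz
  have hn : ‖z‖ ^ 2 = Complex.normSq z := by
    rw [Complex.sq_norm]
  simp only [Complex.sq_norm, hn, Complex.normSq_apply, Complex.sub_re,
    Complex.sub_im, Complex.mul_re, Complex.mul_im, Complex.ofReal_re, Complex.ofReal_im,
    Complex.conj_re, Complex.conj_im, Complex.div_im] at *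
  set a := z.re; set b := z.im; set c := w.re; set d := w.im
  have hne : a*a + b*b ≠ 0 := ne_of_gt hs
  have hne' : a^2 + b^2 ≠ 0 := by rw [sq, sq]; exact hne
  field_simp
  ring

lemma sq_int {α} [MeasurableSpace α] {μ : Measure α} {f : α → ℂ} (hf : MemLp f 2 μ) :
    Integrable (fun x => ‖f x‖ ^ 2) μ := by
  have h := hf.integrable_norm_rpow (by norm_num) (by norm_num)
  refine h.congr (Filter.Eventually.of_forall fun x => ?_)
  simp only [ENNReal.toReal_ofNat]
  norm_num

/-- the minimum of `‖(A - f(X))ψ‖²` over real-valued Borel `f`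
(attained at the conditional expectation `f₀`) equals
`∫_{ψ=0} |Aψ|² dx + ∫_{ψ≠0} (Im(Aψ/ψ))² |ψ|² dx`. -/
theorem stmt_1 {n : ℕ} (ψ Aψ : (Fin n → ℝ) → ℂ)
    (hψmeas : Measurable ψ) (hAψmeas : Measurable Aψ)
    (hψ : MemLp ψ 2 (volume : Measure (Fin n → ℝ)))
    (hAψ : MemLp Aψ 2 (volume : Measure (Fin n → ℝ)))
    (hnorm : ∫ x, ‖ψ x‖ ^ 2 = 1)
    (f₀ : (Fin n → ℝ) → ℝ)
    (hf₀ : ∀ x, f₀ x =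
      if ψ x ≠ 0 then ((starRingEnd ℂ) (ψ x) * Aψ x).re / ‖ψ x‖ ^ 2 else 0) :
    (∀ f : (Fin n → ℝ) → ℝ, Measurable f →
      MemLp (fun x => (f x : ℂ) * ψ x) 2 (volume : Measure (Fin n → ℝ)) →
      ∫ x, ‖Aψ x - (f₀ x : ℂ) * ψ x‖ ^ 2 ≤ ∫ x, ‖Aψ x - (f x : ℂ) * ψ x‖ ^ 2) ∧
    ∫ x, ‖Aψ x - (f₀ x : ℂ) * ψ x‖ ^ 2 =
      (∫ x in {x | ψ x = 0}, ‖Aψ x‖ ^ 2) +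
        ∫ x in {x | ψ x ≠ 0}, ((Aψ x / ψ x).im) ^ 2 * ‖ψ x‖ ^ 2 := by
  have hf₀meas : Measurable f₀ := by
    have : f₀ = fun x => if ψ x ≠ 0 then ((starRingEnd ℂ) (ψ x) * Aψ x).re / ‖ψ x‖ ^ 2 else 0 :=
      funext hf₀
    rw [this]
    exact Measurable.ite (hψmeas (measurableSet_singleton 0)).compl
      ((Complex.measurable_re.comp ((Complex.continuous_conj.measurable.comp hψmeas).mul hAψmeas)).div
        ((hψmeas.norm).pow_const 2)) measurable_const
  have hg₀meas : Measurable fun x => ‖Aψ x - (f₀ x : ℂ) * ψ x‖ ^ 2 :=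
    ((hAψmeas.sub ((Complex.measurable_ofReal.comp hf₀meas).mul hψmeas)).norm).pow_const 2
  have hbound : ∀ x, ‖Aψ x - (f₀ x : ℂ) * ψ x‖ ^ 2 ≤ ‖Aψ x‖ ^ 2 := by
    intro x
    by_cases hx : ψ x = 0
    · simp [hx]
    · have := quad_min (ψ x) (Aψ x) hx 0
      rw [hf₀ x, if_pos hx]
      simpa using this
  have hg₀int : Integrable (fun x => ‖Aψ x - (f₀ x : ℂ) * ψ x‖ ^ 2) volume := by
    refine (sq_int hAψ).mono' hg₀meas.aestronglyMeasurable ?_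
    exact Filter.Eventually.of_forall fun x => by
      rw [Real.norm_eq_abs, _root_.abs_of_nonneg (by positivity)]; exact hbound x
  constructor
  · intro f hf hfψ
    have hint2 : Integrable (fun x => ‖Aψ x - (f x : ℂ) * ψ x‖ ^ 2) volume := sq_int (hAψ.sub hfψ)
    refine integral_mono hg₀int hint2 fun x => ?_
    by_cases hx : ψ x = 0
    · simp [hx]
    · rw [hf₀ x, if_pos hx]
      exact quad_min (ψ x) (Aψ x) hx (f x)
  · have hset : MeasurableSet {x | ψ x = 0} := hψmeas (measurableSet_singleton 0)
    rw [← integral_add_compl hset hg₀int]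
    congr 1
    · refine setIntegral_congr_fun hset fun x hx => ?_
      have hx' : ψ x = 0 := hx
      simp [hx', hf₀ x]
    · refine setIntegral_congr_fun hset.compl fun x hx => ?_
      have hx' : ψ x ≠ 0 := hx
      rw [hf₀ x, if_pos hx']
      exact quad_val (ψ x) (Aψ x) hx'
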